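/- Let {B_k}_{k∈ℕ} be an enumeration of all closed cubes in ℝ^n whose sides are parallel to the coordinate axes, whose centers have all coordinates rational, and whose edge length equals 1/(2^{l−1}√n) for some l ∈ ℕ, l ≥ 1 (so that λ_n(B_k) ≤ 1 for every k). Fix positive reals t_k with Σ_{k=1}^∞ t_k = 1, and for a locally integrable f : ℝ^n → ℂ define ‖f‖_{KS^p} = (Σ_{k=1}^∞ t_k |∫_{B_k} f dλ_n|^p)^{1/p} for 1 ≤ p < ∞ and ‖f‖_{KS^∞} = sup_{k≥1} |∫_{B_k} f dλ_n|. Then for every 1 ≤ p ≤ ∞ and every 1 ≤ q ≤ ∞ and every f ∈ L^q(ℝ^n), one has ‖f‖_{KS^p} ≤ ‖f‖_{L^q}. In particular L^q(ℝ^n) embeds continuously into the KS^p-norm completion for all 1 ≤ p, q ≤ ∞. -/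

import Mathlib

open MeasureTheory
open scoped ENNReal

/-- The closed cube in `ℝ^n` with center `c ∈ ℚ^n`, sides parallel to the coordinate
axes, and edge length `1/(2^(l-1) √n)`: the closed ball of radius half the edge length
around `c` in the sup metric on `ℝ^n`. -/
def ratCube (n : ℕ) (c : Fin n → ℚ) (l : ℕ) : Set (Fin n → ℝ) :=
  Metric.closedBall (fun i => (c i : ℝ)) (1 / (2 ^ (l - 1) * Real.sqrt n) / 2)

/-- `B : ℕ → Set ℝ^n` enumerates the family of all closed cubes with sides parallel to
the coordinate axes, rational centers, and edge length `1/(2^(l-1) √n)` for some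
`l ≥ 1`. -/
def EnumeratesRatCubes (n : ℕ) (B : ℕ → Set (Fin n → ℝ)) : Prop :=
  (∀ k, ∃ (c : Fin n → ℚ) (l : ℕ), 1 ≤ l ∧ B k = ratCube n c l) ∧
  (∀ (c : Fin n → ℚ) (l : ℕ), 1 ≤ l → ∃ k, B k = ratCube n c l)

/-- The `KS^p` norm `(Σ_k t_k |∫_{B_k} f dλ_n|^p)^{1/p}` (for `p < ∞`), resp.
`sup_k |∫_{B_k} f dλ_n|` (for `p = ∞`). -/
noncomputable def KSnorm (n : ℕ) (B : ℕ → Set (Fin n → ℝ)) (t : ℕ → ℝ) (p : ℝ≥0∞)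
    (f : (Fin n → ℝ) → ℂ) : ℝ :=
  if p = ⊤ then ⨆ k, ‖∫ x in B k, f x ∂volume‖
  else (∑' k, t k * ‖∫ x in B k, f x ∂volume‖ ^ p.toReal) ^ (1 / p.toReal)

lemma ratCube_volume_le_one (n : ℕ) (c : Fin n → ℚ) (l : ℕ) :
    volume (ratCube n c l) ≤ 1 := by
  have hr : (0:ℝ) ≤ 1 / (2 ^ (l - 1) * Real.sqrt n) / 2 := by positivity
  rw [ratCube, Real.volume_pi_closedBall _ hr]
  have hx : (1:ℝ) / (2 ^ (l - 1) * Real.sqrt n) ≤ 1 := by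
    rcases Nat.eq_zero_or_pos n with hn | hn
    · simp [hn]
    · have h1 : (1:ℝ) ≤ Real.sqrt n := by
        rw [show (1:ℝ) = Real.sqrt 1 by simp]
        exact Real.sqrt_le_sqrt (by exact_mod_cast hn)
      have h2 : (1:ℝ) ≤ 2 ^ (l - 1) := one_le_pow₀ (by norm_num)
      have : (1:ℝ) ≤ 2 ^ (l - 1) * Real.sqrt n := by nlinarith
      rw [div_le_one (by linarith)]
      exact this
  refine ENNReal.ofReal_le_one.mpr ?_
  refine pow_le_one₀ (by positivity) ?_
  rw [show (2:ℝ) * (1 / (2 ^ (l - 1) * Real.sqrt ↑n) / 2) = 1 / (2 ^ (l-1) * Real.sqrt n)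
    by ring]
  exact hx

lemma key_bound {n : ℕ} {q : ℝ≥0∞} (hq : 1 ≤ q) {f : (Fin n → ℝ) → ℂ}
    (hf : MemLp f q volume) {S : Set (Fin n → ℝ)} (hvol : volume S ≤ 1) :
    ‖∫ x in S, f x ∂volume‖ ≤ (eLpNorm f q volume).toReal := by
  have hle : (‖∫ x in S, f x ∂volume‖₊ : ℝ≥0∞) ≤ eLpNorm f q volume := by
    calc (‖∫ x in S, f x ∂volume‖₊ : ℝ≥0∞)
        ≤ ∫⁻ x in S, ‖f x‖₊ ∂volume := enorm_integral_le_lintegral_enorm f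
      _ = eLpNorm f 1 (volume.restrict S) := (eLpNorm_one_eq_lintegral_enorm (f := f) (μ := volume.restrict S)).symm
      _ ≤ eLpNorm f q (volume.restrict S) *
            (volume.restrict S) Set.univ ^ (1 / (1:ℝ≥0∞).toReal - 1 / q.toReal) :=
          eLpNorm_le_eLpNorm_mul_rpow_measure_univ hq
            (hf.aestronglyMeasurable.restrict)
      _ ≤ eLpNorm f q volume * 1 := by
          refine mul_le_mul ?_ ?_ zero_le zero_le
          · exact eLpNorm_mono_measure f Measure.restrict_le_self
          · refine ENNReal.rpow_le_one ?_ ?_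
            · rw [Measure.restrict_apply_univ]; exact hvol
            · have h1 : 1 / q.toReal ≤ 1 := by
                rcases eq_or_ne q ⊤ with h | h
                · simp [h]
                · have : 1 ≤ q.toReal := by
                    rw [← ENNReal.toReal_one]
                    exact ENNReal.toReal_mono h hq
                  rw [div_le_one (by linarith)]; exact this
              simpa using h1
      _ = eLpNorm f q volume := mul_one _
  have hfin : eLpNorm f q volume ≠ ⊤ := hf.eLpNorm_ne_top
  have := ENNReal.toReal_mono hfin hle
  simpa using this

/-- for all `1 ≤ p ≤ ∞`, `1 ≤ q ≤ ∞` and `f ∈ L^q(ℝ^n)`, one has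
`‖f‖_{KS^p} ≤ ‖f‖_{L^q}`; hence `L^q(ℝ^n)` embeds continuously into `KS^p`. -/
theorem KSnorm_le_Lq_norm
    (n : ℕ) (B : ℕ → Set (Fin n → ℝ)) (hB : EnumeratesRatCubes n B)
    (t : ℕ → ℝ) (ht : ∀ k, 0 < t k) (hts : ∑' k, t k = 1)
    (p q : ℝ≥0∞) (hp : 1 ≤ p) (hq : 1 ≤ q)
    (f : (Fin n → ℝ) → ℂ) (hf : MemLp f q volume) :
    KSnorm n B t p f ≤ (eLpNorm f q volume).toReal := by
  set C := (eLpNorm f q volume).toReal with hC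
  have hC0 : 0 ≤ C := ENNReal.toReal_nonneg
  have hbound : ∀ k, ‖∫ x in B k, f x ∂volume‖ ≤ C := by
    intro k
    obtain ⟨c, l, -, hBk⟩ := hB.1 k
    exact key_bound hq hf (hBk ▸ ratCube_volume_le_one n c l)
  have htsum : Summable t := by
    by_contra h
    rw [tsum_eq_zero_of_not_summable h] at hts
    norm_num at hts
  rw [KSnorm]
  split_ifs with hptop
  · exact ciSup_le hbound
  · have hpr : 1 ≤ p.toReal := by
      rw [← ENNReal.toReal_one]; exact ENNReal.toReal_mono hptop hp
    have hpr0 : p.toReal ≠ 0 := by linarith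
    have hterm : ∀ k, t k * ‖∫ x in B k, f x ∂volume‖ ^ p.toReal ≤ t k * C ^ p.toReal := by
      intro k
      exact mul_le_mul_of_nonneg_left
        (Real.rpow_le_rpow (norm_nonneg _) (hbound k) (by linarith)) (ht k).le
    have hsum2 : Summable (fun k => t k * C ^ p.toReal) := htsum.mul_right _
    have hsum1 : Summable (fun k => t k * ‖∫ x in B k, f x ∂volume‖ ^ p.toReal) :=
      Summable.of_nonneg_of_le
        (fun k => mul_nonneg (ht k).le (Real.rpow_nonneg (norm_nonneg _) _)) hterm hsum2
    have h1 : ∑' k, t k * ‖∫ x in B k, f x ∂volume‖ ^ p.toReal ≤ C ^ p.toReal := by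
      calc ∑' k, t k * ‖∫ x in B k, f x ∂volume‖ ^ p.toReal
          ≤ ∑' k, t k * C ^ p.toReal := Summable.tsum_le_tsum hterm hsum1 hsum2
        _ = (∑' k, t k) * C ^ p.toReal := (tsum_mul_right)
        _ = C ^ p.toReal := by rw [hts, one_mul]
    calc (∑' k, t k * ‖∫ x in B k, f x ∂volume‖ ^ p.toReal) ^ (1 / p.toReal)
        ≤ (C ^ p.toReal) ^ (1 / p.toReal) := by
          refine Real.rpow_le_rpow ?_ h1 (by positivity)
          exact tsum_nonneg fun k =>
            mul_nonneg (ht k).le (Real.rpow_nonneg (norm_nonneg _) _)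
      _ = C := by
          rw [← Real.rpow_mul hC0, mul_one_div, div_self hpr0, Real.rpow_one]
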